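/- Assume h > 0 > ℓ, ℓ^† < kα < h^†, and h^A > ℓ^A, and let β_C = h(ℓ^†−kα)/(ℓ(h^†−kα)). Then β_C > 0, and β_C > 1 if and only if h(ℓ^†−kα) − ℓ(h^†−kα) < 0, which holds if and only if g(p̂) < 0, where p̂ = (kα − ℓ^A)/(h^A − ℓ^A). -/
import Mathlib


open Real

/-- `β_C = h(ℓ†-kα)/(ℓ(h†-kα)) > 0`, and `β_C > 1` iff
`h(ℓ†-kα) - ℓ(h†-kα) < 0` iff `g(p̂) < 0`, where `p̂ = (kα - ℓᴬ)/(hᴬ - ℓᴬ)`. -/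
theorem stmt_14 (h ℓ α hd ld k hA lA : ℝ) (hh : 0 < h) (hℓ : ℓ < 0) (hα : 0 < α)
    (hld : ld < k * α) (hhd : k * α < hd)
    (hhA : hA = h + hd) (hlA : lA = ℓ + ld) (hAgt : lA < hA)
    (g : ℝ → ℝ)
    (hg : ∀ x : ℝ, g x = (1 / α) *
      max (x * hd + (1 - x) * ld - k * α) (-(x * h) - (1 - x) * ℓ))
    (βC phat : ℝ)
    (hβC : βC = h * (ld - k * α) / (ℓ * (hd - k * α)))
    (hphat : phat = (k * α - lA) / (hA - lA)) :
    0 < βC ∧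
    (1 < βC ↔ h * (ld - k * α) - ℓ * (hd - k * α) < 0) ∧
    (h * (ld - k * α) - ℓ * (hd - k * α) < 0 ↔ g phat < 0) := by
  subst hhA; subst hlA
  have hnum : h * (ld - k * α) < 0 := mul_neg_of_pos_of_neg hh (by linarith)
  have hden : ℓ * (hd - k * α) < 0 := mul_neg_of_neg_of_pos hℓ (by linarith)
  have hD : (0:ℝ) < h + hd - (ℓ + ld) := by linarith
  have hDne : h + hd - (ℓ + ld) ≠ 0 := ne_of_gt hD
  have hpD : phat * (h + hd - (ℓ + ld)) = k * α - (ℓ + ld) := by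
    rw [hphat]; field_simp
  -- the two arguments of the max are equal at phat
  have heq : phat * hd + (1 - phat) * ld - k * α = -(phat * h) - (1 - phat) * ℓ := by
    have : phat * (h + hd) + (1 - phat) * (ℓ + ld) - k * α = 0 := by
      nlinarith [hpD]
    nlinarith [this]
  have hgp : g phat = (1 / α) * (-(phat * h) - (1 - phat) * ℓ) := by
    rw [hg phat, heq, max_self]
  refine ⟨?_, ?_, ?_⟩
  · rw [hβC]; exact div_pos_of_neg_of_neg hnum hden
  · rw [hβC, lt_div_iff_of_neg hden]
    constructor <;> intro <;> nlinarith
  · rw [hgp]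
    have h1α : (0:ℝ) < 1 / α := by positivity
    constructor
    · intro hlt
      have hb : -(phat * h) - (1 - phat) * ℓ < 0 := by
        have : (-(phat * h) - (1 - phat) * ℓ) * (h + hd - (ℓ + ld)) < 0 := by
          nlinarith [hpD]
        exact neg_of_mul_neg_left this (le_of_lt hD)
      exact mul_neg_of_pos_of_neg h1α hb
    · intro hlt
      have hb : -(phat * h) - (1 - phat) * ℓ < 0 := by
        by_contra hcon
        push_neg at hcon
        nlinarith
      have hmul : (-(phat * h) - (1 - phat) * ℓ) * (h + hd - (ℓ + ld)) < 0 :=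
        mul_neg_of_neg_of_pos hb hD
      nlinarith [hpD, hmul]
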